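/- Let n ≥ k ≥ 1 be integers and let w be a nonzero complex number. Let r_1 > r_2 > … > r_k and l_1 > l_2 > … > l_k be two strictly decreasing sequences of integers with all values in {0,…,n}. Then the sum, over all k-tuples (t_1,…,t_k) of complex numbers with t_i^{n+1} = w for each i (each t_i ranging independently over all (n+1)-th roots of w), of det((t_i^{r_j})_{1≤i,j≤k}) · det((t_i^{l_j})_{1≤i,j≤k}) · t_1 t_2 ⋯ t_k, equals k! · ((n+1)·w)^k · (−1)^{⌊k/2⌋} if r_j + l_{k+1−j} = n for every j = 1,…,k, and equals 0 otherwise. -/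

import Mathlib

open scoped BigOperators

open Polynomial

private def grsRswap (k i : ℕ) : Equiv.Perm (Fin k) :=
  if h : i < k then Equiv.swap ⟨i, h⟩ (Fin.rev ⟨i, h⟩) else 1

private lemma grs_val_rev' {k : ℕ} (x : Fin k) : (Fin.rev x).val = k - 1 - x.val := by
  rw [Fin.val_rev]; omega

private lemma grsRswap_prod_apply (k : ℕ) : ∀ m, m ≤ k / 2 → ∀ x : Fin k,
    ((List.range m).map (grsRswap k)).prod x
      = if x.val < m ∨ k - 1 - x.val < m then Fin.rev x else x := by
  intro m
  induction m with
  | zero => intro _ x; simp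
  | succ m ih =>
    intro hm x
    have hmk : m < k := by omega
    rw [List.range_succ, List.map_append, List.prod_append]
    simp only [List.map_cons, List.map_nil, List.prod_cons, List.prod_nil, mul_one]
    rw [Equiv.Perm.mul_apply, grsRswap, dif_pos hmk]
    have hval : (Fin.rev (⟨m, hmk⟩ : Fin k)).val = k - 1 - m := grs_val_rev' _
    by_cases h1 : x = (⟨m, hmk⟩ : Fin k)
    · subst h1
      rw [Equiv.swap_apply_left, ih (by omega)]
      rw [if_neg (by rw [hval]; omega)]
      rw [if_pos (Or.inl (by simp))]
    · by_cases h2 : x = Fin.rev (⟨m, hmk⟩ : Fin k)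
      · subst h2
        rw [Equiv.swap_apply_right, ih (by omega)]
        rw [if_neg (by simp only [Fin.val_mk]; omega)]
        rw [if_pos (Or.inr (by rw [hval]; omega)), Fin.rev_rev]
      · rw [Equiv.swap_apply_of_ne_of_ne h1 h2, ih (by omega)]
        have hv1 : x.val ≠ m := fun h => h1 (Fin.ext h)
        have hv2 : x.val ≠ k - 1 - m := fun h => h2 (Fin.ext (by rw [hval, h]))
        have hxk := x.isLt
        have hiff : (x.val < m ∨ k - 1 - x.val < m) ↔
            (x.val < m + 1 ∨ k - 1 - x.val < m + 1) := by omega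
        rw [if_congr hiff rfl rfl]

private lemma grs_sign_revPerm (k : ℕ) :
    Equiv.Perm.sign (Fin.revPerm : Equiv.Perm (Fin k)) = (-1 : ℤˣ) ^ (k / 2) := by
  have hprod : ((List.range (k / 2)).map (grsRswap k)).prod = Fin.revPerm := by
    apply Equiv.ext; intro x
    rw [grsRswap_prod_apply k (k / 2) le_rfl x]
    by_cases h : x.val < k / 2 ∨ k - 1 - x.val < k / 2
    · rw [if_pos h]; rfl
    · rw [if_neg h]; push_neg at h
      have hxk := x.isLt
      have hh : x = Fin.rev x := Fin.ext (by rw [grs_val_rev']; omega)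
      exact hh
  rw [← hprod, Equiv.Perm.sign.map_list_prod, List.map_map]
  rw [List.prod_eq_pow_card _ (-1 : ℤˣ) ?_, List.length_map, List.length_range]
  intro u hu
  simp only [List.mem_map, List.mem_range] at hu
  obtain ⟨i, hik2, rfl⟩ := hu
  have hik : i < k := by omega
  have hne : (⟨i, hik⟩ : Fin k) ≠ Fin.rev ⟨i, hik⟩ := by
    intro h
    have := congrArg Fin.val h
    rw [grs_val_rev'] at this; simp at this; omega
  simp only [Function.comp_apply, grsRswap, dif_pos hik]
  exact Equiv.Perm.sign_swap hne

/-- **Lemma 3.4(i) of the paper** (computational content).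
For `w ≠ 0` and strictly decreasing sequences `r, l : Fin k → ℕ` with values in
`{0,…,n}`, the sum over all `k`-tuples `t` of `(n+1)`-th roots of `w` of
`det(t_i^{r_j})·det(t_i^{l_j})·t_1⋯t_k` equals
`k!·((n+1)w)^k·(−1)^⌊k/2⌋` if `r_j + l_{k+1−j} = n` for all `j`, and `0` otherwise. -/
theorem grothendieck_residue_sum (n k : ℕ) (hk : 1 ≤ k) (hkn : k ≤ n)
    (w : ℂ) (hw : w ≠ 0)
    (r l : Fin k → ℕ) (hr : StrictAnti r) (hl : StrictAnti l)
    (hrn : ∀ j, r j ≤ n) (hln : ∀ j, l j ≤ n) :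
    (∑ t ∈ Fintype.piFinset
        (fun _ : Fin k => (Polynomial.X ^ (n + 1) - Polynomial.C w).roots.toFinset),
        Matrix.det (Matrix.of fun i j : Fin k => t i ^ r j)
          * Matrix.det (Matrix.of fun i j : Fin k => t i ^ l j)
          * ∏ i, t i)
      = if ∀ j, r j + l (Fin.rev j) = n
          then (Nat.factorial k : ℂ) * (((n : ℂ) + 1) * w) ^ k * (-1 : ℂ) ^ (k / 2)
          else 0 := by
  classical
  set R := (X ^ (n + 1) - C w).roots.toFinset with hRdef
  -- membership in the root set
  have hpne : (X ^ (n + 1) - C w : ℂ[X]) ≠ 0 := X_pow_sub_C_ne_zero (Nat.succ_pos n) w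
  have hmem : ∀ z : ℂ, z ∈ R ↔ z ^ (n + 1) = w := by
    intro z
    rw [hRdef, Multiset.mem_toFinset, mem_roots hpne, IsRoot.def, eval_sub, eval_pow, eval_X,
      eval_C, sub_eq_zero]
  obtain ⟨c, hc⟩ : ∃ c : ℂ, c ^ (n + 1) = w := IsAlgClosed.exists_pow_nat_eq w (Nat.succ_pos n)
  have hcne : c ≠ 0 := by
    intro h; apply hw; rw [← hc, h, zero_pow (Nat.succ_ne_zero n)]
  obtain ⟨ζ, hζ⟩ : ∃ ζ : ℂ, IsPrimitiveRoot ζ (n + 1) :=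
    ⟨_, Complex.isPrimitiveRoot_exp _ (Nat.succ_ne_zero n)⟩
  have hζpow : ζ ^ (n + 1) = 1 := hζ.pow_eq_one
  have hRim : R = (Finset.range (n + 1)).image (fun j => c * ζ ^ j) := by
    ext z
    rw [hmem]
    simp only [Finset.mem_image, Finset.mem_range]
    constructor
    · intro hz
      have h1 : (z / c) ^ (n + 1) = 1 := by
        rw [div_pow, hz, hc, div_self hw]
      obtain ⟨i, hi, hzi⟩ := hζ.eq_pow_of_pow_eq_one h1
      exact ⟨i, hi, by rw [hzi, mul_div_cancel₀ _ hcne]⟩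
    · rintro ⟨j, hj, rfl⟩
      rw [mul_pow, hc, ← pow_mul, mul_comm j (n + 1), pow_mul, hζpow, one_pow, mul_one]
  -- power sums over the root set
  have hS0 : ∀ m : ℕ, (∑ z ∈ R, z ^ m) = if (n + 1) ∣ m then ((n : ℂ) + 1) * c ^ m else 0 := by
    intro m
    rw [hRim, Finset.sum_image (fun a ha b hb hab => by
      rw [Finset.mem_coe, Finset.mem_range] at ha hb
      exact hζ.pow_inj ha hb (mul_left_cancel₀ hcne hab))]
    have hco : ∀ j ∈ Finset.range (n + 1), (c * ζ ^ j) ^ m = c ^ m * (ζ ^ m) ^ j := by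
      intro j _
      rw [mul_pow, ← pow_mul, ← pow_mul, mul_comm j m]
    rw [Finset.sum_congr rfl hco, ← Finset.mul_sum]
    by_cases hdvd : (n + 1) ∣ m
    · rw [if_pos hdvd, (hζ.pow_eq_one_iff_dvd m).2 hdvd]
      simp only [one_pow, Finset.sum_const, Finset.card_range, nsmul_eq_mul]
      push_cast; ring
    · rw [if_neg hdvd]
      have h1 : ζ ^ m ≠ 1 := fun h => hdvd ((hζ.pow_eq_one_iff_dvd m).1 h)
      rw [geom_sum_eq h1, ← pow_mul, mul_comm m (n + 1), pow_mul, hζpow, one_pow,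
        sub_self, zero_div, mul_zero]
  have hS : ∀ m : ℕ, 1 ≤ m → m ≤ 2 * n + 1 →
      (∑ z ∈ R, z ^ m) = if m = n + 1 then ((n : ℂ) + 1) * w else 0 := by
    intro m hm1 hm2
    rw [hS0 m]
    by_cases he : m = n + 1
    · rw [if_pos he, if_pos (he ▸ Dvd.intro 1 (by omega)), he, hc]
    · rw [if_neg he, if_neg ?_]
      rintro ⟨q, hq⟩
      have hq2 : q < 2 := by nlinarith
      interval_cases q <;> omega
  -- product of power sums
  have hprod : ∀ a b : Fin k → ℕ, (∀ i, a i ≤ n) → (∀ i, b i ≤ n) →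
      (∏ i : Fin k, ∑ z ∈ R, z ^ (a i + b i + 1))
        = if ∀ i, a i + b i = n then (((n : ℂ) + 1) * w) ^ k else 0 := by
    intro a b ha hb
    have hfac : ∀ i, (∑ z ∈ R, z ^ (a i + b i + 1))
        = if a i + b i = n then ((n : ℂ) + 1) * w else 0 := by
      intro i
      rw [hS _ (by omega) (by have := ha i; have := hb i; omega)]
      exact if_congr (by omega) rfl rfl
    rw [Finset.prod_congr rfl fun i _ => hfac i]
    by_cases hall : ∀ i, a i + b i = n
    · rw [if_pos hall, Finset.prod_congr rfl fun i _ => if_pos (hall i)]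
      rw [Finset.prod_const, Finset.card_univ, Fintype.card_fin]
    · rw [if_neg hall]
      push_neg at hall
      obtain ⟨i, hi⟩ := hall
      exact Finset.prod_eq_zero (Finset.mem_univ i) (if_neg hi)
  -- the combinatorial characterization
  have hC : ∀ σ τ : Equiv.Perm (Fin k), (∀ i, r (σ⁻¹ i) + l (τ⁻¹ i) = n) ↔
      ((∀ j, r j + l (Fin.rev j) = n) ∧ τ = σ * (Fin.revPerm : Equiv.Perm (Fin k))) := by
    intro σ τ
    constructor
    · intro h
      set u : Fin k → Fin k := fun j => τ⁻¹ (σ j) with hu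
      have h' : ∀ j, r j + l (u j) = n := by
        intro j
        have := h (σ j)
        rwa [Equiv.Perm.coe_inv, Equiv.symm_apply_apply] at this
      have hub : Function.Bijective u := (σ.trans τ.symm).bijective
      have hurev : ∀ j, u j = Fin.rev j := by
        have hmono : StrictMono (fun j => Fin.rev (u j)) := by
          intro j j' hjj
          have hrr : r j' < r j := hr hjj
          have h1 : l (u j) < l (u j') := by
            have e1 := h' j
            have e2 := h' j'
            have := hrn j
            omega
          have h2 : u j' < u j := by
            by_contra hle
            push_neg at hle
            have := hl.antitone hle
            omega
          exact Fin.rev_lt_rev.mpr h2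
        have hid : (fun j => Fin.rev (u j)) = id := by
          apply (StrictMono.range_inj hmono strictMono_id).mp
          rw [Set.range_id, Set.range_eq_univ]
          exact (Fin.rev_bijective.comp hub).surjective
        intro j
        exact Fin.rev_eq_iff.mp (congrFun hid j)
      refine ⟨fun j => by have := h' j; rwa [hurev j] at this, ?_⟩
      apply Equiv.ext
      intro x
      have hx2 : τ⁻¹ (σ (Fin.rev x)) = x := by
        have : u (Fin.rev x) = x := by rw [hurev, Fin.rev_rev]
        exact this
      calc τ x = τ (τ⁻¹ (σ (Fin.rev x))) := by rw [hx2]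
        _ = σ (Fin.rev x) := by rw [Equiv.Perm.coe_inv, Equiv.apply_symm_apply]
        _ = (σ * (Fin.revPerm : Equiv.Perm (Fin k))) x := rfl
    · rintro ⟨hcond, rfl⟩
      intro i
      have hinv : (σ * (Fin.revPerm : Equiv.Perm (Fin k)))⁻¹ i = Fin.rev (σ⁻¹ i) := rfl
      rw [hinv]
      exact hcond (σ⁻¹ i)
  -- expand the determinants
  have hterm : ∀ t : Fin k → ℂ,
      Matrix.det (Matrix.of fun i j : Fin k => t i ^ r j)
          * Matrix.det (Matrix.of fun i j : Fin k => t i ^ l j) * ∏ i, t i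
        = ∑ σ : Equiv.Perm (Fin k), ∑ τ : Equiv.Perm (Fin k),
            (((Equiv.Perm.sign σ : ℤ) : ℂ) * ((Equiv.Perm.sign τ : ℤ) : ℂ))
              * ∏ i, t i ^ (r (σ⁻¹ i) + l (τ⁻¹ i) + 1) := by
    intro t
    rw [Matrix.det_apply', Matrix.det_apply', Finset.sum_mul_sum, Finset.sum_mul]
    apply Finset.sum_congr rfl
    intro σ _
    rw [Finset.sum_mul]
    apply Finset.sum_congr rfl
    intro τ _
    simp only [Matrix.of_apply]
    have h1 : ∏ i, t (σ i) ^ r i = ∏ i, t i ^ r (σ⁻¹ i) := by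
      rw [← Equiv.prod_comp σ fun i => t i ^ r (σ⁻¹ i)]
      exact Finset.prod_congr rfl fun i _ => by rw [Equiv.Perm.coe_inv, Equiv.symm_apply_apply]
    have h2 : ∏ i, t (τ i) ^ l i = ∏ i, t i ^ l (τ⁻¹ i) := by
      rw [← Equiv.prod_comp τ fun i => t i ^ l (τ⁻¹ i)]
      exact Finset.prod_congr rfl fun i _ => by rw [Equiv.Perm.coe_inv, Equiv.symm_apply_apply]
    calc (((Equiv.Perm.sign σ : ℤ) : ℂ) * ∏ i, t (σ i) ^ r i)
          * (((Equiv.Perm.sign τ : ℤ) : ℂ) * ∏ i, t (τ i) ^ l i) * ∏ i, t i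
        = (((Equiv.Perm.sign σ : ℤ) : ℂ) * ((Equiv.Perm.sign τ : ℤ) : ℂ))
            * ((∏ i, t i ^ r (σ⁻¹ i)) * (∏ i, t i ^ l (τ⁻¹ i)) * ∏ i, t i) := by
          rw [h1, h2]; ring
      _ = (((Equiv.Perm.sign σ : ℤ) : ℂ) * ((Equiv.Perm.sign τ : ℤ) : ℂ))
            * ∏ i, t i ^ (r (σ⁻¹ i) + l (τ⁻¹ i) + 1) := by
          rw [← Finset.prod_mul_distrib, ← Finset.prod_mul_distrib]
          congr 1
          exact Finset.prod_congr rfl fun i _ => by ring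
  -- main computation
  calc (∑ t ∈ Fintype.piFinset (fun _ : Fin k => R),
        Matrix.det (Matrix.of fun i j : Fin k => t i ^ r j)
          * Matrix.det (Matrix.of fun i j : Fin k => t i ^ l j) * ∏ i, t i)
      = ∑ t ∈ Fintype.piFinset (fun _ : Fin k => R),
          ∑ σ : Equiv.Perm (Fin k), ∑ τ : Equiv.Perm (Fin k),
            (((Equiv.Perm.sign σ : ℤ) : ℂ) * ((Equiv.Perm.sign τ : ℤ) : ℂ))
              * ∏ i, t i ^ (r (σ⁻¹ i) + l (τ⁻¹ i) + 1) :=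
        Finset.sum_congr rfl fun t _ => hterm t
    _ = ∑ σ : Equiv.Perm (Fin k), ∑ τ : Equiv.Perm (Fin k),
          ∑ t ∈ Fintype.piFinset (fun _ : Fin k => R),
            (((Equiv.Perm.sign σ : ℤ) : ℂ) * ((Equiv.Perm.sign τ : ℤ) : ℂ))
              * ∏ i, t i ^ (r (σ⁻¹ i) + l (τ⁻¹ i) + 1) := by
        rw [Finset.sum_comm]
        exact Finset.sum_congr rfl fun σ _ => Finset.sum_comm
    _ = ∑ σ : Equiv.Perm (Fin k), ∑ τ : Equiv.Perm (Fin k),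
          (((Equiv.Perm.sign σ : ℤ) : ℂ) * ((Equiv.Perm.sign τ : ℤ) : ℂ))
            * if ∀ i, r (σ⁻¹ i) + l (τ⁻¹ i) = n then (((n : ℂ) + 1) * w) ^ k else 0 := by
        apply Finset.sum_congr rfl
        intro σ _
        apply Finset.sum_congr rfl
        intro τ _
        rw [← Finset.mul_sum]
        congr 1
        rw [← Finset.prod_univ_sum (fun _ : Fin k => R)
          (fun i z => z ^ (r (σ⁻¹ i) + l (τ⁻¹ i) + 1))]
        exact hprod _ _ (fun i => hrn _) (fun i => hln _)
    _ = if ∀ j, r j + l (Fin.rev j) = n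
          then (Nat.factorial k : ℂ) * (((n : ℂ) + 1) * w) ^ k * (-1 : ℂ) ^ (k / 2)
          else 0 := by
        by_cases hcond : ∀ j, r j + l (Fin.rev j) = n
        · rw [if_pos hcond]
          have inner : ∀ σ : Equiv.Perm (Fin k),
              (∑ τ : Equiv.Perm (Fin k),
                (((Equiv.Perm.sign σ : ℤ) : ℂ) * ((Equiv.Perm.sign τ : ℤ) : ℂ))
                  * if ∀ i, r (σ⁻¹ i) + l (τ⁻¹ i) = n then (((n : ℂ) + 1) * w) ^ k else 0)
                = ((Equiv.Perm.sign (Fin.revPerm : Equiv.Perm (Fin k)) : ℤ) : ℂ)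
                    * (((n : ℂ) + 1) * w) ^ k := by
            intro σ
            rw [Finset.sum_eq_single (σ * (Fin.revPerm : Equiv.Perm (Fin k)))]
            · rw [if_pos ((hC σ _).mpr ⟨hcond, rfl⟩)]
              have hs : ((Equiv.Perm.sign (σ * (Fin.revPerm : Equiv.Perm (Fin k))) : ℤ) : ℂ)
                  = ((Equiv.Perm.sign σ : ℤ) : ℂ)
                    * ((Equiv.Perm.sign (Fin.revPerm : Equiv.Perm (Fin k)) : ℤ) : ℂ) := by
                rw [Equiv.Perm.sign_mul]; push_cast; ring
              rw [hs]
              rcases Int.units_eq_one_or (Equiv.Perm.sign σ) with h | h <;> rw [h] <;>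
                simp <;> ring
            · intro τ _ hτ
              rw [if_neg fun hcst => hτ ((hC σ τ).mp hcst).2, mul_zero]
            · intro h
              exact absurd (Finset.mem_univ _) h
          rw [Finset.sum_congr rfl fun σ _ => inner σ]
          rw [Finset.sum_const, Finset.card_univ, Fintype.card_perm, Fintype.card_fin,
            grs_sign_revPerm, nsmul_eq_mul]
          push_cast
          ring
        · rw [if_neg hcond]
          apply Finset.sum_eq_zero
          intro σ _
          apply Finset.sum_eq_zero
          intro τ _
          rw [if_neg fun hcst => hcond ((hC σ τ).mp hcst).1, mul_zero]
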